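/- Suppose the chooser's values g^C_1,…,g^C_n are independent with g^C_i Gaussian of mean μ_i > 0 and variance σ_i² with σ_i > 0, the divider's values satisfy g^D_i > 0 for all i, and there exist goods j, k with g^D_j/μ_j > g^D_k/μ_k. Then there exists a division q ∈ [−1,1]^n with ∑_i q_i g^D_i > 0 and P(q) < 1/2, and consequently the divider's expected utility U(q) strictly exceeds his baseline utility (1/2)∑_i g^D_i. (One such division is q_j = (g^D_k + μ_k)/α, q_k = −(g^D_j + μ_j)/α, q_i = 0 otherwise, where α = max{g^D_j + μ_j, g^D_k + μ_k}.) -/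

import Mathlib

open BigOperators MeasureTheory ProbabilityTheory

lemma gaussianReal_map_reflection (m : ℝ) (v : NNReal) :
    (gaussianReal m v).map (fun x => 2 * m - x) = gaussianReal m v := by
  have h : (fun x : ℝ => 2 * m - x) = (· + 2 * m) ∘ (fun x : ℝ => (-1 : ℝ) * x) := by
    funext x; simp; ring
  have h1 : ((-1 : ℝ) * ·) = (fun x : ℝ => (-1 : ℝ) * x) := rfl
  rw [h, ← Measure.map_map (by fun_prop) (by fun_prop), ← h1,
    gaussianReal_map_const_mul, gaussianReal_map_add_const]
  have hv : (⟨(-1 : ℝ) ^ 2, sq_nonneg _⟩ : NNReal) = 1 := by ext; norm_num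
  rw [show -1 * m + 2 * m = m by ring]; congr 1; ext; simp

/-- With chooser values independent Gaussians `g^C_i ~ N(m_i, σ_i²)`,
`m_i > 0`, `σ_i > 0`, divider values `g^D_i > 0`, and two goods `j, k` with strictly
different critical ratios `g^D_j/m_j > g^D_k/m_k`, there is a division `q ∈ [−1,1]^n` with
`∑ q_i g^D_i > 0` and `P(q) < 1/2`, hence `U(q)` strictly exceeds the divider's baseline
`(1/2)∑ g^D_i`. -/
theorem unequal_critical_ratios_beats_baseline (n : ℕ) (gD m σ : Fin n → ℝ)
    (hm : ∀ i, 0 < m i) (hσ : ∀ i, 0 < σ i) (hgD : ∀ i, 0 < gD i)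
    (j k : Fin n) (hjk : gD k / m k < gD j / m j)
    (μ : Measure (Fin n → ℝ))
    (hμ : μ = Measure.pi fun i => gaussianReal (m i) (Real.toNNReal (σ i ^ 2)))
    (P : (Fin n → ℝ) → ℝ)
    (hP : ∀ q : Fin n → ℝ, P q = (μ {x | 0 < ∑ i, q i * x i}).toReal)
    (U : (Fin n → ℝ) → ℝ)
    (hU : ∀ q : Fin n → ℝ, U q = P q * ∑ i, (1 - (1 + q i) / 2) * gD i
            + (1 - P q) * ∑ i, ((1 + q i) / 2) * gD i) :
    ∃ q : Fin n → ℝ,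
      (∀ i, q i ∈ Set.Icc (-1 : ℝ) 1) ∧
      0 < ∑ i, q i * gD i ∧
      P q < 1 / 2 ∧
      (1 / 2) * ∑ i, gD i < U q := by
  classical
  have hne : j ≠ k := by rintro rfl; exact lt_irrefl _ hjk
  set α : ℝ := max (gD j + m j) (gD k + m k) with hαdef
  have hαpos : 0 < α := lt_of_lt_of_le (by have := hgD j; have := hm j; linarith)
    (le_max_left _ _)
  set a : ℝ := (gD k + m k) / α with hadef
  set b : ℝ := -((gD j + m j) / α) with hbdef
  have ha : 0 < a := div_pos (by have := hgD k; have := hm k; linarith) hαpos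
  have ha1 : a ≤ 1 := (div_le_one hαpos).mpr (le_max_right _ _)
  have hb : b < 0 := neg_neg_iff_pos.mpr
    (div_pos (by have := hgD j; have := hm j; linarith) hαpos)
  have hb1 : -1 ≤ b := by
    have : (gD j + m j) / α ≤ 1 := (div_le_one hαpos).mpr (le_max_left _ _)
    rw [hbdef]; linarith
  set q : Fin n → ℝ := fun i => if i = j then a else if i = k then b else 0 with hqdef
  have key : ∀ x : Fin n → ℝ, ∑ i, q i * x i = a * x j + b * x k := by
    intro x
    have hterm : ∀ i, q i * x i
        = (if j = i then a * x j else 0) + (if k = i then b * x k else 0) := by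
      intro i
      by_cases h1 : i = j
      · subst h1; simp [hqdef, Ne.symm hne]
      · by_cases h2 : i = k
        · subst h2; simp [hqdef, h1, hne]
        · simp [hqdef, h1, h2, Ne.symm h1, Ne.symm h2]
    rw [Finset.sum_congr rfl fun i _ => hterm i, Finset.sum_add_distrib,
      Finset.sum_ite_eq, Finset.sum_ite_eq]
    simp
  -- key numeric inequalities
  have hmm : gD k * m j < gD j * m k := (div_lt_div_iff₀ (hm k) (hm j)).mp hjk
  have hS : 0 < a * gD j + b * gD k := by
    have : a * gD j + b * gD k = (gD j * m k - gD k * m j) / α := by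
      rw [hadef, hbdef]; field_simp; ring
    rw [this]; exact div_pos (by linarith) hαpos
  have hc : a * m j + b * m k < 0 := by
    have : a * m j + b * m k = (gD k * m j - gD j * m k) / α := by
      rw [hadef, hbdef]; field_simp; ring
    rw [this]; exact div_neg_of_neg_of_pos (by linarith) hαpos
  set c : ℝ := a * m j + b * m k with hcdef
  -- measure-theoretic part
  have hσ2 : ∀ i, Real.toNNReal (σ i ^ 2) ≠ 0 := fun i =>
    (Real.toNNReal_pos.mpr (pow_pos (hσ i) 2)).ne'
  haveI : IsProbabilityMeasure μ := by rw [hμ]; infer_instance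
  haveI : Measure.IsOpenPosMeasure μ := by
    rw [hμ]
    haveI : ∀ i, Measure.IsOpenPosMeasure (gaussianReal (m i) (Real.toNNReal (σ i ^ 2))) :=
      fun i => (gaussianReal_absolutelyContinuous' (m i) (hσ2 i)).isOpenPosMeasure
    infer_instance
  have hφ : MeasurePreserving (fun (x : Fin n → ℝ) i => 2 * m i - x i) μ μ := by
    rw [hμ]
    exact measurePreserving_pi _ _ fun i =>
      ⟨by fun_prop, gaussianReal_map_reflection (m i) _⟩
  set L : (Fin n → ℝ) → ℝ := fun x => ∑ i, q i * x i with hLdef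
  have hLmeas : Measurable L :=
    Finset.measurable_sum _ fun i _ => by fun_prop
  have hLcont : Continuous L :=
    continuous_finset_sum _ fun i _ => continuous_const.mul (continuous_apply i)
  set A : Set (Fin n → ℝ) := {x | 0 < L x} with hAdef
  set B : Set (Fin n → ℝ) := {x | L x < 2 * c} with hBdef
  set C : Set (Fin n → ℝ) := {x | 2 * c < L x} ∩ {x | L x < 0} with hCdef
  have hAmeas : MeasurableSet A := measurableSet_lt measurable_const hLmeas
  have hBmeas : MeasurableSet B := measurableSet_lt hLmeas measurable_const
  have hCmeas : MeasurableSet C :=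
    (measurableSet_lt measurable_const hLmeas).inter (measurableSet_lt hLmeas measurable_const)
  have hpre : (fun (x : Fin n → ℝ) i => 2 * m i - x i) ⁻¹' A = B := by
    ext x
    simp only [Set.mem_preimage, hAdef, hBdef, Set.mem_setOf_eq, hLdef]
    rw [key, key]
    rw [hcdef]
    constructor <;> intro h <;> nlinarith [h]
  have hBA : μ B = μ A := by
    rw [← hpre]; exact hφ.measure_preimage hAmeas.nullMeasurableSet
  have hCopen : IsOpen C :=
    (isOpen_lt continuous_const hLcont).inter (isOpen_lt hLcont continuous_const)
  have hmC : m ∈ C := by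
    constructor <;> simp only [Set.mem_setOf_eq, hLdef] <;> rw [key] <;> rw [← hcdef] <;> linarith
  have hC0 : μ C ≠ 0 := hCopen.measure_ne_zero μ ⟨m, hmC⟩
  have hdisj1 : Disjoint A B := Set.disjoint_left.mpr (by
    intro x hxA hxB
    simp only [hAdef, hBdef, Set.mem_setOf_eq] at hxA hxB
    linarith)
  have hdisj2 : Disjoint (A ∪ B) C := Set.disjoint_left.mpr (by
    intro x hx hxC
    obtain ⟨hx1, hx2⟩ := hxC
    simp only [Set.mem_setOf_eq] at hx1 hx2
    rcases hx with hx | hx <;> simp only [hAdef, hBdef, Set.mem_setOf_eq] at hx <;> linarith)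
  have hsum : μ A + μ B + μ C ≤ 1 := by
    rw [← measure_union hdisj1 hBmeas, ← measure_union hdisj2 hCmeas]
    exact prob_le_one
  rw [hBA] at hsum
  have hfinA : μ A ≠ ⊤ := measure_ne_top μ A
  have hfinC : μ C ≠ ⊤ := measure_ne_top μ C
  have h3 : (μ A).toReal + (μ A).toReal + (μ C).toReal ≤ 1 := by
    have := ENNReal.toReal_mono ENNReal.one_ne_top hsum
    rwa [ENNReal.toReal_add (ENNReal.add_ne_top.mpr ⟨hfinA, hfinA⟩) hfinC,
      ENNReal.toReal_add hfinA hfinA, ENNReal.toReal_one] at this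
  have hpC : 0 < (μ C).toReal := ENNReal.toReal_pos hC0 hfinC
  have hPq : P q = (μ A).toReal := by rw [hP]
  have hPlt : P q < 1 / 2 := by rw [hPq]; linarith
  refine ⟨q, ?_, ?_, hPlt, ?_⟩
  · intro i
    simp only [hqdef]
    rw [Set.mem_Icc]
    split_ifs with h1 h2
    · exact ⟨by linarith, ha1⟩
    · exact ⟨hb1, by linarith⟩
    · exact ⟨by norm_num, by norm_num⟩
  · rw [key]; exact hS
  · have e1 : ∑ i, (1 - (1 + q i) / 2) * gD i
        = (∑ i, gD i) / 2 - (∑ i, q i * gD i) / 2 := by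
      rw [Finset.sum_div, Finset.sum_div, ← Finset.sum_sub_distrib]
      exact Finset.sum_congr rfl fun i _ => by ring
    have e2 : ∑ i, ((1 + q i) / 2) * gD i
        = (∑ i, gD i) / 2 + (∑ i, q i * gD i) / 2 := by
      rw [Finset.sum_div, Finset.sum_div, ← Finset.sum_add_distrib]
      exact Finset.sum_congr rfl fun i _ => by ring
    have hSq : 0 < ∑ i, q i * gD i := by rw [key]; exact hS
    rw [hU, e1, e2]
    nlinarith [mul_pos hSq (by linarith : 0 < 1 / 2 - P q)]
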